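/- Let n, m ≥ 1 be integers, 0 ≤ c, R with c + R < 1, ζ ∈ ℝ, and C = c·e^{iζ}. Then the area integral over the disk B(C, R) = {x ∈ ℂ : |x - C| < R} satisfies: -(1/π) ∫_{B(C,R)} x^{m-1} · conj(x)^{n-1} dA(x) = -e^{i(m-n)ζ} · Σ_{k=0}^{min(n,m)-1} (1/(k+1)) · C(m-1, k) · C(n-1, k) · c^{m+n-2k-2} · R^{2k+2}. -/

import Mathlib

open Real Complex Finset MeasureTheory Metric

lemma rot_int (a b : ℕ) (R θ : ℝ) :
    ∫ y in ball (0:ℂ) R, y ^ a * (starRingEnd ℂ) y ^ b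
      = Complex.exp (θ * Complex.I) ^ a * Complex.exp (-(θ * Complex.I)) ^ b *
        ∫ y in ball (0:ℂ) R, y ^ a * (starRingEnd ℂ) y ^ b := by
  set e := rotation (Circle.exp θ) with he
  have hmp := e.measurePreserving
  have hemb : MeasurableEmbedding e := e.toHomeomorph.measurableEmbedding
  have hpre : e ⁻¹' (ball (0:ℂ) R) = ball (0:ℂ) R := by
    rw [he, LinearIsometryEquiv.preimage_ball, map_zero]
  calc ∫ y in ball (0:ℂ) R, y ^ a * (starRingEnd ℂ) y ^ b
      = ∫ y in e ⁻¹' (ball (0:ℂ) R), (e y) ^ a * (starRingEnd ℂ) (e y) ^ b := by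
        rw [hmp.setIntegral_preimage_emb hemb (fun y => y ^ a * (starRingEnd ℂ) y ^ b)]
    _ = Complex.exp (θ * Complex.I) ^ a * Complex.exp (-(θ * Complex.I)) ^ b *
        ∫ y in ball (0:ℂ) R, y ^ a * (starRingEnd ℂ) y ^ b := by
        rw [hpre, ← integral_const_mul]
        refine setIntegral_congr_fun measurableSet_ball (fun y _ => ?_)
        simp only [he, rotation_apply, Circle.coe_exp, map_mul, mul_pow, map_pow]
        rw [← Complex.exp_conj]
        simp only [map_mul, Complex.conj_ofReal, Complex.conj_I, mul_neg]
        ring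

lemma int_offdiag (a b : ℕ) (hab : a ≠ b) (R : ℝ) :
    ∫ y in ball (0:ℂ) R, y ^ a * (starRingEnd ℂ) y ^ b = 0 := by
  have hab' : (a : ℝ) - b ≠ 0 := sub_ne_zero.mpr (Nat.cast_injective.ne hab)
  have h := rot_int a b R (π / ((a:ℝ) - b))
  have hcoef : Complex.exp ((π / ((a:ℝ) - b) : ℝ) * Complex.I) ^ a *
      Complex.exp (-((π / ((a:ℝ) - b) : ℝ) * Complex.I)) ^ b = -1 := by
    rw [← Complex.exp_nat_mul, ← Complex.exp_nat_mul, ← Complex.exp_add,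
      ← Complex.exp_pi_mul_I]
    congr 1
    have : ((a : ℂ) - b) ≠ 0 := by
      exact_mod_cast (Complex.ofReal_ne_zero.mpr hab')
    push_cast
    field_simp
    ring
  rw [hcoef] at h
  have h2 : (2:ℂ) * ∫ y in ball (0:ℂ) R, y ^ a * (starRingEnd ℂ) y ^ b = 0 := by
    linear_combination h
  simpa using h2

lemma real_int_diag (a : ℕ) (R : ℝ) (hR : 0 ≤ R) :
    ∫ y in ball (0:ℂ) R, Complex.normSq y ^ a = π * R ^ (2*a+2) / (a+1) := by
  set g : ℝ → ℝ := Set.indicator (Set.Iio R) (fun t => t ^ (2*a)) with hg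
  have h1 : ∫ y in ball (0:ℂ) R, Complex.normSq y ^ a = ∫ y : ℂ, g ‖y‖ := by
    rw [← integral_indicator measurableSet_ball]
    congr 1
    ext y
    rw [hg]
    by_cases hy : y ∈ ball (0:ℂ) R
    · rw [Set.indicator_of_mem hy, Set.indicator_of_mem (by simpa [mem_ball_zero_iff] using hy)]
      rw [Complex.normSq_eq_norm_sq, ← pow_mul, mul_comm]
    · rw [Set.indicator_of_notMem hy, Set.indicator_of_notMem
        (by simpa [mem_ball_zero_iff] using hy)]
  rw [h1, MeasureTheory.integral_fun_norm_addHaar volume g]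
  have hdim : Module.finrank ℝ ℂ = 2 := Complex.finrank_real_complex
  rw [hdim]
  have h2 : ∫ y in Set.Ioi (0:ℝ), y ^ (2-1) • g y
      = ∫ y in Set.Ioi (0:ℝ), Set.indicator (Set.Iio R) (fun t => t ^ (2*a+1)) y := by
    refine integral_congr_ae (Filter.Eventually.of_forall fun y => ?_)
    simp only [hg, Set.indicator_apply, smul_eq_mul, Set.mem_Iio]
    by_cases hy : y < R
    · simp only [if_pos hy, pow_succ]
      ring
    · simp [hy]
  rw [h2, setIntegral_indicator measurableSet_Iio, Set.Ioi_inter_Iio,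
    ← MeasureTheory.integral_Ioc_eq_integral_Ioo, ← intervalIntegral.integral_of_le hR,
    integral_pow]
  have hvol : volume.real (ball (0:ℂ) 1) = π := by
    simp [Measure.real, Complex.volume_ball, ENNReal.toReal_mul, ENNReal.toReal_pow]
  rw [hvol]
  have h3 : ((2*a+1 : ℕ) : ℝ) + 1 ≠ 0 := by positivity
  rw [nsmul_eq_mul]
  rw [zero_pow (by omega : 2*a+1+1 ≠ 0)]
  push_cast
  push_cast at h3
  have h4 : (a:ℝ) + 1 ≠ 0 := by positivity
  rw [smul_eq_mul]
  field_simp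
  ring

lemma int_diagC (a : ℕ) (R : ℝ) (hR : 0 ≤ R) :
    ∫ y in ball (0:ℂ) R, y ^ a * (starRingEnd ℂ) y ^ a
      = (π : ℂ) * R ^ (2*a+2) / (a+1) := by
  have h : ∀ y : ℂ, y ^ a * (starRingEnd ℂ) y ^ a = ((Complex.normSq y ^ a : ℝ) : ℂ) := by
    intro y
    rw [← mul_pow, Complex.mul_conj, Complex.ofReal_pow]
  rw [integral_congr_ae (Filter.Eventually.of_forall h)]
  have h2 : ∫ y in ball (0:ℂ) R, ((Complex.normSq y ^ a : ℝ) : ℂ)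
      = ((∫ y in ball (0:ℂ) R, Complex.normSq y ^ a : ℝ) : ℂ) := integral_ofReal
  rw [h2, real_int_diag a R hR]
  push_cast
  ring

lemma integrableOn_monomial (i j : ℕ) (C : ℂ) (R : ℝ) :
    IntegrableOn (fun y : ℂ => y ^ i * (starRingEnd ℂ) y ^ j) (Metric.ball C R) := by
  have hc : Continuous fun y : ℂ => y ^ i * (starRingEnd ℂ) y ^ j :=
    (continuous_pow i).mul ((Complex.continuous_conj).pow j)
  exact (hc.locallyIntegrable.integrableOn_isCompact (isCompact_closedBall C R)).mono_set
    ball_subset_closedBall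

lemma translate_int (C : ℂ) (R : ℝ) (f : ℂ → ℂ) :
    ∫ x in ball C R, f x = ∫ y in ball (0:ℂ) R, f (C + y) := by
  have hmp : MeasurePreserving (fun y : ℂ => C + y) volume volume :=
    measurePreserving_add_left volume C
  have hemb : MeasurableEmbedding (fun y : ℂ => C + y) :=
    (Homeomorph.addLeft C).measurableEmbedding
  rw [← hmp.setIntegral_preimage_emb hemb f (ball C R)]
  congr 1
  ext z
  simp [mem_ball, Complex.dist_eq, add_sub_cancel_left]

lemma mono_int (i j : ℕ) (R : ℝ) (hR : 0 ≤ R) :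
    ∫ y in ball (0:ℂ) R, y ^ i * (starRingEnd ℂ) y ^ j
      = if i = j then (π : ℂ) * R ^ (2*i+2) / (i+1) else 0 := by
  by_cases h : i = j
  · subst h; rw [if_pos rfl]; exact int_diagC i R hR
  · rw [if_neg h]; exact int_offdiag i j h R

lemma ball_int_expand (M N : ℕ) (C : ℂ) (R : ℝ) (hR : 0 ≤ R) :
    ∫ x in ball C R, x ^ M * (starRingEnd ℂ) x ^ N
      = ∑ k ∈ Finset.range (min (M+1) (N+1)),
          C ^ (M-k) * (starRingEnd ℂ) C ^ (N-k) * (M.choose k) * (N.choose k) *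
            ((π : ℂ) * R ^ (2*k+2) / (k+1)) := by
  rw [translate_int]
  have hexp : ∀ y : ℂ, (C + y) ^ M * (starRingEnd ℂ) (C + y) ^ N
      = ∑ i ∈ Finset.range (M+1), ∑ j ∈ Finset.range (N+1),
          (C ^ (M-i) * (starRingEnd ℂ) C ^ (N-j) * (M.choose i) * (N.choose j)) *
            (y ^ i * (starRingEnd ℂ) y ^ j) := by
    intro y
    rw [add_comm C y, add_pow, map_add, add_pow, Finset.sum_mul_sum]
    refine Finset.sum_congr rfl fun i _ => Finset.sum_congr rfl fun j _ => ?_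
    ring
  rw [integral_congr_ae (Filter.Eventually.of_forall fun y => hexp y)]
  rw [integral_finset_sum _ (fun i _ => integrable_finset_sum _ (fun j _ =>
    ((integrableOn_monomial i j 0 R).const_mul _)))]
  have : ∀ i ∈ Finset.range (M+1),
      (∫ y in ball (0:ℂ) R, ∑ j ∈ Finset.range (N+1),
        (C ^ (M-i) * (starRingEnd ℂ) C ^ (N-j) * (M.choose i) * (N.choose j)) *
          (y ^ i * (starRingEnd ℂ) y ^ j))
      = if i ∈ Finset.range (N+1) then
          C ^ (M-i) * (starRingEnd ℂ) C ^ (N-i) * (M.choose i) * (N.choose i) *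
            ((π : ℂ) * R ^ (2*i+2) / (i+1)) else 0 := by
    intro i _
    rw [integral_finset_sum _ (fun j _ => (integrableOn_monomial i j 0 R).const_mul _)]
    have h1 : ∀ j ∈ Finset.range (N+1),
        (∫ y in ball (0:ℂ) R,
          (C ^ (M-i) * (starRingEnd ℂ) C ^ (N-j) * (M.choose i) * (N.choose j)) *
            (y ^ i * (starRingEnd ℂ) y ^ j))
        = if i = j then C ^ (M-i) * (starRingEnd ℂ) C ^ (N-i) * (M.choose i) * (N.choose i) *
            ((π : ℂ) * R ^ (2*i+2) / (i+1)) else 0 := by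
      intro j _
      rw [MeasureTheory.integral_const_mul, mono_int i j R hR]
      by_cases h : i = j
      · subst h; simp
      · simp [h]
    rw [Finset.sum_congr rfl h1, Finset.sum_ite_eq]
  rw [Finset.sum_congr rfl this, Finset.sum_ite_mem]
  congr 1
  ext x
  simp only [Finset.mem_inter, Finset.mem_range, lt_min_iff]

theorem frechet_derivative_entry (n m : ℕ) (hn : 1 ≤ n) (hm : 1 ≤ m)
    (c R ζ : ℝ) (hc : 0 ≤ c) (hR : 0 ≤ R) (hcR : c + R < 1) :
    -(1 / (π : ℂ)) * ∫ x in Metric.ball ((c : ℂ) * Complex.exp (Complex.I * ζ)) R,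
        x ^ (m - 1) * (starRingEnd ℂ) x ^ (n - 1) =
      -Complex.exp (Complex.I * ((m : ℂ) - n) * ζ) *
        ∑ k ∈ Finset.range (min n m),
          (1 / ((k : ℂ) + 1)) * ((m - 1).choose k : ℂ) * ((n - 1).choose k : ℂ) *
            (c : ℂ) ^ (m + n - 2 * k - 2) * (R : ℂ) ^ (2 * k + 2) := by
  have hC := ball_int_expand (m-1) (n-1) ((c:ℂ) * Complex.exp (Complex.I * ζ)) R hR
  rw [show m - 1 + 1 = m from by omega, show n - 1 + 1 = n from by omega, min_comm m n] at hC
  rw [hC, Finset.mul_sum, Finset.mul_sum]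
  have hconj : (starRingEnd ℂ) ((c:ℂ) * Complex.exp (Complex.I * ζ))
      = (c:ℂ) * Complex.exp (-(Complex.I * ζ)) := by
    rw [map_mul, Complex.conj_ofReal, ← Complex.exp_conj]
    simp [Complex.conj_I]
  refine Finset.sum_congr rfl fun k hk => ?_
  simp only [Finset.mem_range, lt_min_iff] at hk
  obtain ⟨hkn, hkm⟩ := hk
  rw [hconj, mul_pow, mul_pow, ← Complex.exp_nat_mul, ← Complex.exp_nat_mul]
  have e3 : Complex.exp ((m-1-k:ℕ) * (Complex.I*ζ)) *
      Complex.exp ((n-1-k:ℕ) * (-(Complex.I*ζ)))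
      = Complex.exp (Complex.I*((m:ℂ)-n)*ζ) := by
    rw [← Complex.exp_add]
    congr 1
    push_cast [Nat.cast_sub (show k ≤ m-1 by omega), Nat.cast_sub (show k ≤ n-1 by omega),
      Nat.cast_sub hm, Nat.cast_sub hn]
    ring
  have e4 : (c:ℂ)^(m-1-k) * (c:ℂ)^(n-1-k) = (c:ℂ)^(m+n-2*k-2) := by
    rw [← pow_add]
    congr 1
    omega
  rw [← e3, ← e4]
  have hπ : (π:ℂ) ≠ 0 := Complex.ofReal_ne_zero.mpr Real.pi_ne_zero
  have hk1 : (k:ℂ)+1 ≠ 0 := Nat.cast_add_one_ne_zero k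
  field_simp
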